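/- Let I = (a,b) be an open real interval with a < b, let p ≥ 2 be a prime with p > 3/(b-a), and let k ≥ 1 be a natural number. Then there exists an integer q coprime with kp such that a < q/(kp) < b. -/

import Mathlib

/-- Helper: `k*s+1` is coprime to `k`. -/
lemma aux_coprime_k (k s : ℤ) : IsCoprime (k * s + 1) k :=
  ⟨1, -s, by ring⟩

/-- If `p` is a prime with `p > 3/(b-a)` and `k ≥ 1`, then there is an
irreducible fraction `q/(kp)` in the interval `(a,b)`. -/
theorem irreducible_fraction_denominator_kp (a b : ℝ) (hab : a < b)
    (p : ℕ) (hp : p.Prime) (hpbig : (p : ℝ) > 3 / (b - a))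
    (k : ℕ) (hk : 1 ≤ k) :
    ∃ q : ℤ, Int.gcd q ((k : ℤ) * (p : ℤ)) = 1 ∧
      a < (q : ℝ) / ((k : ℝ) * (p : ℝ)) ∧ (q : ℝ) / ((k : ℝ) * (p : ℝ)) < b := by
  have hba : (0:ℝ) < b - a := sub_pos.mpr hab
  have hk0 : (0:ℝ) < (k:ℝ) := by exact_mod_cast hk
  have hp0 : (0:ℝ) < (p:ℝ) := by exact_mod_cast hp.pos
  set N : ℝ := (k:ℝ) * (p:ℝ) with hN
  have hN0 : (0:ℝ) < N := mul_pos hk0 hp0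
  have hp3 : 3 < (p:ℝ) * (b - a) := by
    rw [gt_iff_lt, div_lt_iff₀ hba] at hpbig
    exact hpbig
  have hNab : 2 * (k:ℝ) < N * (b - a) := by
    have : 2 * (k:ℝ) < (k:ℝ) * 3 := by nlinarith
    nlinarith
  set t : ℤ := ⌊(N * a - 1) / (k:ℝ)⌋ + 1 with htdef
  have ht1 : (N * a - 1) / (k:ℝ) < (t:ℝ) := by
    push_cast [htdef]
    exact Int.lt_floor_add_one _
  have ht2 : (t:ℝ) ≤ (N * a - 1) / (k:ℝ) + 1 := by
    push_cast [htdef]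
    exact add_le_add_left (Int.floor_le _) 1
  have hkt_lb : N * a - 1 < (k:ℝ) * t := by
    rw [div_lt_iff₀ hk0] at ht1; linarith [ht1]
  have hkt_ub : (k:ℝ) * t ≤ N * a - 1 + (k:ℝ) := by
    have h := (le_div_iff₀ hk0).mp (by linarith : (t:ℝ) - 1 ≤ (N * a - 1) / (k:ℝ))
    nlinarith
  -- the two candidates
  have bounds : ∀ q : ℤ, ((q:ℝ) = (k:ℝ)*t + 1 ∨ (q:ℝ) = (k:ℝ)*t + (k:ℝ) + 1) →
      a < (q:ℝ) / N ∧ (q:ℝ) / N < b := by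
    intro q hq
    have hlo : N * a < (q:ℝ) := by rcases hq with h | h <;> rw [h] <;> nlinarith
    have hhi : (q:ℝ) < N * b := by
      rcases hq with h | h <;> rw [h] <;> nlinarith
    constructor
    · rw [lt_div_iff₀ hN0]; linarith [hlo]
    · rw [div_lt_iff₀ hN0]; linarith [hhi]
  have hgcd : ∀ q : ℤ, IsCoprime q ((p:ℤ)) → (∃ s, q = (k:ℤ) * s + 1) →
      Int.gcd q ((k : ℤ) * (p : ℤ)) = 1 := by
    intro q hcp ⟨s, hs⟩
    rw [← Int.isCoprime_iff_gcd_eq_one]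
    exact IsCoprime.mul_right (hs ▸ aux_coprime_k (k:ℤ) s) hcp
  have hpZ : Prime ((p:ℤ)) := Nat.prime_iff_prime_int.mp hp
  by_cases hpd : ((p:ℤ)) ∣ ((k:ℤ) * t + 1)
  · refine ⟨(k:ℤ) * (t + 1) + 1, ?_, ?_⟩
    · refine hgcd _ ?_ ⟨t + 1, rfl⟩
      rw [Int.isCoprime_iff_gcd_eq_one, Int.gcd_comm, ← Int.isCoprime_iff_gcd_eq_one]
      rw [hpZ.coprime_iff_not_dvd]
      intro hdvd
      have hk' : ((p:ℤ)) ∣ (k:ℤ) := by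
        have : ((p:ℤ)) ∣ ((k:ℤ) * (t + 1) + 1) - ((k:ℤ) * t + 1) := dvd_sub hdvd hpd
        simpa [mul_add] using this
      have : ((p:ℤ)) ∣ 1 := by
        have h1 : ((p:ℤ)) ∣ (k:ℤ) * t := hk'.mul_right t
        have := dvd_sub hpd h1
        simpa using this
      exact hpZ.not_dvd_one this
    · have := bounds ((k:ℤ) * (t + 1) + 1) (by right; push_cast; ring)
      exact this
  · refine ⟨(k:ℤ) * t + 1, ?_, ?_⟩
    · refine hgcd _ ?_ ⟨t, rfl⟩
      rw [Int.isCoprime_iff_gcd_eq_one, Int.gcd_comm, ← Int.isCoprime_iff_gcd_eq_one]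
      exact hpZ.coprime_iff_not_dvd.mpr hpd
    · exact bounds ((k:ℤ) * t + 1) (by left; push_cast; ring)
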